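/- Let ε > 0 and λ > 0. Suppose there exists z* > 0 such that the set prox_{λg}(z*) contains both 0 and some positive number. Then for every z ∈ ℝ with |z| ≠ z*, the set prox_{λg}(z) is a singleton; more precisely, prox_{λg}(z) = {0} whenever |z| < z*, and prox_{λg}(z) consists of exactly one nonzero element whenever |z| > z*. -/

import Mathlib

open Real Filter

/-- The scalar log-sum penalty `g(w) = log(1 + |w|/ε)`. -/
noncomputable def logpen (ε : ℝ) (w : ℝ) : ℝ := Real.log (1 + |w| / ε)

/-- The objective `q_{λ,z}(x) = (1/(2λ))(x − z)² + g(x)`. -/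
noncomputable def qfun (lam ε z x : ℝ) : ℝ :=
  1 / (2 * lam) * (x - z) ^ 2 + logpen ε x

/-- The proximity operator of `λ g` at `z`: the set of global minimizers of `q_{λ,z}`. -/
def prox (lam ε z : ℝ) : Set ℝ := {x | ∀ y : ℝ, qfun lam ε z x ≤ qfun lam ε z y}

/-- `r₁(z) = (z − ε)/2 − √((z + ε)²/4 − λ)`. -/
noncomputable def r1 (lam ε z : ℝ) : ℝ :=
  (z - ε) / 2 - Real.sqrt ((z + ε) ^ 2 / 4 - lam)

/-- `r₂(z) = (z − ε)/2 + √((z + ε)²/4 − λ)`. -/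
noncomputable def r2 (lam ε z : ℝ) : ℝ :=
  (z - ε) / 2 + Real.sqrt ((z + ε) ^ 2 / 4 - lam)

/-- `r(z) = q_{λ,z}(r₂(z)) − q_{λ,z}(0)`. -/
noncomputable def rfun (lam ε z : ℝ) : ℝ :=
  qfun lam ε z (r2 lam ε z) - qfun lam ε z 0

/-- The iteratively reweighted ℓ₁ iteration for `prox_{λ g}(z)`. -/
def IterRW (lam ε z : ℝ) (x : ℕ → ℝ) : Prop :=
  ∀ k : ℕ, x (k + 1) =
    if |z| ≤ lam / (ε + |x k|) then 0
    else Real.sign z * (|z| - lam / (ε + |x k|))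

lemma logpen_nonneg {ε : ℝ} (hε : 0 < ε) (x : ℝ) : 0 ≤ logpen ε x := by
  unfold logpen
  apply Real.log_nonneg
  have : 0 ≤ |x| / ε := by positivity
  linarith

lemma logpen_zero (ε : ℝ) : logpen ε 0 = 0 := by simp [logpen]

lemma logpen_neg (ε x : ℝ) : logpen ε (-x) = logpen ε x := by simp [logpen]

lemma qfun_cont {lam ε : ℝ} (hε : 0 < ε) (z : ℝ) : Continuous (qfun lam ε z) := by
  unfold qfun logpen
  exact (continuous_const.mul ((continuous_id.sub continuous_const).pow 2)).add
    ((continuous_const.add (continuous_abs.div_const ε)).log (fun x => ne_of_gt (show (0:ℝ) < 1 + |x| / ε by have := div_nonneg (abs_nonneg x) hε.le; linarith)))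

lemma qfun_shift {lam : ℝ} (hlam : lam ≠ 0) (ε z z' x : ℝ) :
    qfun lam ε z x - qfun lam ε z 0 = qfun lam ε z' x - qfun lam ε z' 0 + x * (z' - z) / lam := by
  unfold qfun
  rw [logpen_zero]
  field_simp
  ring

lemma qfun_reflect {lam : ℝ} (hlam : lam ≠ 0) (ε z x : ℝ) :
    qfun lam ε z x - qfun lam ε z (-x) = -(2 * x * z) / lam := by
  unfold qfun
  rw [logpen_neg]
  field_simp
  ring

lemma qfun_symm (lam ε z x : ℝ) : qfun lam ε (-z) (-x) = qfun lam ε z x := by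
  unfold qfun
  rw [logpen_neg]
  ring

lemma mem_prox_neg_of {lam ε z x : ℝ} (h : x ∈ prox lam ε z) : -x ∈ prox lam ε (-z) := by
  intro y
  have h1 : qfun lam ε (-z) (-x) = qfun lam ε z x := qfun_symm lam ε z x
  have h2 : qfun lam ε (-z) y = qfun lam ε z (-y) := by
    have := qfun_symm lam ε z (-y); rwa [neg_neg] at this
  rw [h1, h2]; exact h (-y)

lemma mem_prox_neg {lam ε z x : ℝ} : x ∈ prox lam ε z ↔ -x ∈ prox lam ε (-z) :=
  ⟨mem_prox_neg_of, fun h => by simpa using mem_prox_neg_of h⟩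

lemma prox_nonempty {lam ε : ℝ} (hε : 0 < ε) (hlam : 0 < lam) (z : ℝ) :
    ∃ b, b ∈ prox lam ε z := by
  have hlb : ∀ x : ℝ, 1 / (2 * lam) * (x - z) ^ 2 ≤ qfun lam ε z x := fun x =>
    le_add_of_nonneg_right (logpen_nonneg hε x)
  have hsub : Tendsto (fun x : ℝ => x - z) atTop atTop :=
    tendsto_atTop_add_const_right _ (-z) tendsto_id |>.congr (fun x => by simp only [id_eq]; ring)
  have hsubB : Tendsto (fun x : ℝ => x - z) atBot atBot :=
    tendsto_atBot_add_const_right _ (-z) tendsto_id |>.congr (fun x => by simp only [id_eq]; ring)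
  have hsq : Tendsto (fun x : ℝ => 1 / (2 * lam) * (x - z) ^ 2) atTop atTop := by
    have := hsub.atTop_mul_atTop₀ hsub
    have h2 := this.const_mul_atTop (show (0:ℝ) < 1/(2*lam) by positivity)
    exact h2.congr (fun x => by ring)
  have hsqB : Tendsto (fun x : ℝ => 1 / (2 * lam) * (x - z) ^ 2) atBot atTop := by
    have := hsubB.atBot_mul_atBot₀ hsubB
    have h2 := this.const_mul_atTop (show (0:ℝ) < 1/(2*lam) by positivity)
    exact h2.congr (fun x => by ring)
  have hco : Tendsto (qfun lam ε z) (cocompact ℝ) atTop := by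
    rw [cocompact_eq_atBot_atTop, tendsto_sup]
    exact ⟨tendsto_atTop_mono hlb hsqB, tendsto_atTop_mono hlb hsq⟩
  exact (qfun_cont hε z).exists_forall_le hco

lemma qfun_hasDerivAt {lam ε : ℝ} (hε : 0 < ε) (hlam : 0 < lam) (z : ℝ) {x : ℝ}
    (hx : 0 < x) :
    HasDerivAt (qfun lam ε z) ((x - z) / lam + 1 / (ε + x)) x := by
  have hA : HasDerivAt (fun y : ℝ => (y - z) ^ 2) (2 * (x - z)) x := by
    simpa using ((hasDerivAt_id x).sub_const z).fun_pow 2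
  have hB : HasDerivAt (fun y : ℝ => 1 + y / ε) (1 / ε) x := by
    simpa using ((hasDerivAt_id x).div_const ε).const_add 1
  have hpos : 0 < 1 + x / ε := by positivity
  have hC := hB.log hpos.ne'
  have hD := (hA.const_mul (1 / (2 * lam))).add hC
  have hval : 1 / (2 * lam) * (2 * (x - z)) + 1 / ε / (1 + x / ε)
      = (x - z) / lam + 1 / (ε + x) := by
    have h1 : ε + x ≠ 0 := by positivity
    field_simp
  rw [hval] at hD
  refine hD.congr_of_eventuallyEq ?_
  filter_upwards [eventually_gt_nhds hx] with y hy
  simp [qfun, logpen, abs_of_pos hy]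

lemma crit_eq {lam ε z x : ℝ} (hε : 0 < ε) (hlam : 0 < lam) (hx : 0 < x)
    (h : (x - z) / lam + 1 / (ε + x) = 0) : (x - z) * (ε + x) + lam = 0 := by
  have h1 : ε + x ≠ 0 := by positivity
  field_simp at h
  linarith

lemma prox_crit {lam ε z b : ℝ} (hε : 0 < ε) (hlam : 0 < lam)
    (hb : b ∈ prox lam ε z) (hbp : 0 < b) : (b - z) * (ε + b) + lam = 0 := by
  have hd := qfun_hasDerivAt hε hlam z hbp
  have hmin : IsLocalMin (qfun lam ε z) b := Filter.Eventually.of_forall hb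
  exact crit_eq hε hlam hbp (hmin.hasDerivAt_eq_zero hd)

lemma prox_pos_unique {lam ε z : ℝ} (hε : 0 < ε) (hlam : 0 < lam) {b c : ℝ}
    (hb : b ∈ prox lam ε z) (hc : c ∈ prox lam ε z) (hbp : 0 < b) (hcp : 0 < c) :
    b = c := by
  have core : ∀ b c : ℝ, b ∈ prox lam ε z → c ∈ prox lam ε z → 0 < b → 0 < c →
      b < c → False := by
    intro b c hb hc hbp hcp hlt
    have heq : qfun lam ε z b = qfun lam ε z c := le_antisymm (hb c) (hc b)
    obtain ⟨d, hd, hd0⟩ := exists_hasDerivAt_eq_slope (qfun lam ε z)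
      (fun x => (x - z) / lam + 1 / (ε + x)) hlt ((qfun_cont hε z).continuousOn)
      (fun x hx => qfun_hasDerivAt hε hlam z (lt_trans hbp hx.1))
    rw [heq, sub_self, zero_div] at hd0
    have hdp : 0 < d := lt_trans hbp hd.1
    have eqb := prox_crit hε hlam hb hbp
    have eqc := prox_crit hε hlam hc hcp
    have eqd := crit_eq hε hlam hdp hd0
    have h1 : (b - d) * (ε + b + d - z) = 0 := by linear_combination eqb - eqd
    have h2 : (c - d) * (ε + c + d - z) = 0 := by linear_combination eqc - eqd
    have hbd : b ≠ d := ne_of_lt hd.1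
    have hcd : c ≠ d := (ne_of_lt hd.2).symm
    have h3 : ε + b + d - z = 0 := by
      rcases mul_eq_zero.mp h1 with h | h
      · exact absurd (sub_eq_zero.mp h) hbd
      · exact h
    have h4 : ε + c + d - z = 0 := by
      rcases mul_eq_zero.mp h2 with h | h
      · exact absurd (sub_eq_zero.mp h) hcd
      · exact h
    have : b = c := by linarith
    exact absurd this (ne_of_lt hlt)
  rcases lt_trichotomy b c with h | h | h
  · exact absurd (core b c hb hc hbp hcp h) not_false
  · exact h
  · exact absurd (core c b hc hb hcp hbp h) not_false

lemma prox_eq_zero {lam ε zs : ℝ} (hε : 0 < ε) (hlam : 0 < lam)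
    (h0 : (0 : ℝ) ∈ prox lam ε zs) {z : ℝ} (hz0 : 0 ≤ z) (hz : z < zs) :
    prox lam ε z = {0} := by
  have key : ∀ x : ℝ, x ≠ 0 → qfun lam ε z 0 < qfun lam ε z x := by
    have keypos : ∀ x : ℝ, 0 < x → qfun lam ε z 0 < qfun lam ε z x := by
      intro x hx
      have h1 : qfun lam ε zs 0 ≤ qfun lam ε zs x := h0 x
      have h2 := qfun_shift hlam.ne' ε z zs x
      have h3 : 0 < x * (zs - z) / lam := div_pos (mul_pos hx (by linarith)) hlam
      linarith
    intro x hx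
    rcases hx.lt_or_gt with h | h
    · have h1 := qfun_reflect hlam.ne' ε z x
      have h2 : 0 ≤ -(2 * x * z) / lam := by
        apply div_nonneg _ hlam.le
        nlinarith
      have h3 := keypos (-x) (by linarith)
      linarith
    · exact keypos x h
  ext x
  simp only [Set.mem_singleton_iff]
  constructor
  · intro hx
    by_contra hne
    have := key x hne
    have := hx 0
    linarith
  · rintro rfl
    intro y
    rcases eq_or_ne y 0 with rfl | hy
    · exact le_refl _
    · exact (key y hy).le

lemma prox_big {lam ε zs : ℝ} (hε : 0 < ε) (hlam : 0 < lam) (hzs : 0 < zs)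
    {a : ℝ} (hapos : 0 < a) (ha : a ∈ prox lam ε zs) {z : ℝ} (hz : zs < z) :
    ∃ b : ℝ, 0 < b ∧ prox lam ε z = {b} := by
  obtain ⟨b, hb⟩ := prox_nonempty hε hlam z
  have hzpos : 0 < z := lt_trans hzs hz
  have hposmem : ∀ x : ℝ, x ∈ prox lam ε z → 0 < x := by
    intro x hx
    have hxa : qfun lam ε z a < qfun lam ε z 0 := by
      have h1 : qfun lam ε zs a ≤ qfun lam ε zs 0 := ha 0
      have h2 := qfun_shift hlam.ne' ε z zs a
      have h3 : a * (zs - z) / lam < 0 :=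
        div_neg_of_neg_of_pos (mul_neg_of_pos_of_neg hapos (by linarith)) hlam
      linarith
    have hne : x ≠ 0 := by
      rintro rfl
      have := hx a
      linarith
    rcases hne.lt_or_gt with h | h
    · exfalso
      have h1 := qfun_reflect hlam.ne' ε z x
      have h2 : 0 < -(2 * x * z) / lam := by
        apply div_pos _ hlam
        nlinarith
      have := hx (-x)
      linarith
    · exact h
  have hbp := hposmem b hb
  refine ⟨b, hbp, ?_⟩
  ext x
  simp only [Set.mem_singleton_iff]
  constructor
  · intro hx
    exact prox_pos_unique hε hlam hx hb (hposmem x hx) hbp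
  · rintro rfl
    exact hb

/-- if `prox_{λg}(z*)` contains 0 and a positive number, it is a
singleton away from `±z*`. -/
theorem prox_singleton_away (ε lam zs : ℝ) (hε : 0 < ε) (hlam : 0 < lam)
    (hzs : 0 < zs) (h0 : (0 : ℝ) ∈ prox lam ε zs)
    (hpos : ∃ a : ℝ, 0 < a ∧ a ∈ prox lam ε zs) :
    (∀ z : ℝ, |z| < zs → prox lam ε z = {0}) ∧
    (∀ z : ℝ, zs < |z| → ∃ a : ℝ, a ≠ 0 ∧ prox lam ε z = {a}) := by
  obtain ⟨a, hapos, ha⟩ := hpos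
  constructor
  · intro z hz
    rcases le_or_gt 0 z with hz0 | hz0
    · exact prox_eq_zero hε hlam h0 hz0 (by rwa [abs_of_nonneg hz0] at hz)
    · have h1 : prox lam ε (-z) = {0} :=
        prox_eq_zero hε hlam h0 (by linarith) (by rwa [abs_of_neg hz0] at hz)
      ext x
      simp only [Set.mem_singleton_iff]
      rw [show (x ∈ prox lam ε z) ↔ -x ∈ prox lam ε (-z) from mem_prox_neg, h1]
      simp [neg_eq_zero]
  · intro z hz
    rcases le_or_gt 0 z with hz0 | hz0
    · have hz' : zs < z := by rwa [abs_of_nonneg hz0] at hz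
      obtain ⟨b, hbp, hbeq⟩ := prox_big hε hlam hzs hapos ha hz'
      exact ⟨b, hbp.ne', hbeq⟩
    · have hz' : zs < -z := by rwa [abs_of_neg hz0] at hz
      obtain ⟨b, hbp, hbeq⟩ := prox_big hε hlam hzs hapos ha hz'
      refine ⟨-b, by simpa using hbp.ne', ?_⟩
      ext x
      simp only [Set.mem_singleton_iff]
      rw [show (x ∈ prox lam ε z) ↔ -x ∈ prox lam ε (-z) from mem_prox_neg, hbeq]
      simp only [Set.mem_singleton_iff]
      constructor
      · intro h; linarith [h]
      · rintro rfl; ring
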